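/- Let C̃ be a (convex polyhedral) cone in ℝ^n and let C be a proper face of C̃, with S(C) the linear span of C. Then there exists r_0 > 0 such that for every δ* > 0 and every point P* ∈ S(C) with dist(P*, C̃) ≤ δ*, we have dist(P*, C) ≤ r_0 δ*. -/

import Mathlib

open scoped RealInnerProductSpace

/-- A (convex polyhedral) cone in `ℝ^n`: nonnegative combinations of finitely many vectors. -/
def IsPolyhedralCone {n : ℕ} (C : Set (EuclideanSpace ℝ (Fin n))) : Prop :=
  ∃ (k : ℕ) (v : Fin k → EuclideanSpace ℝ (Fin n)),
    C = {x | ∃ lam : Fin k → ℝ, (∀ i, 0 ≤ lam i) ∧ x = ∑ i, lam i • v i}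

/-- `F` is a face of the cone `C`. -/
def IsFaceOf {n : ℕ} (F C : Set (EuclideanSpace ℝ (Fin n))) : Prop :=
  F = C ∨ ∃ u : EuclideanSpace ℝ (Fin n),
    (∀ x ∈ C, ⟪u, x⟫ ≤ 0) ∧ F = C ∩ {x | ⟪u, x⟫ = 0}

/-- The dimension of a cone: the dimension of its linear span. -/
noncomputable def coneDim {n : ℕ} (C : Set (EuclideanSpace ℝ (Fin n))) : ℕ :=
  Module.finrank ℝ (Submodule.span ℝ C)

/-- A facet of `C` is a face of dimension `dim C - 1`. -/
def IsFacetOf {n : ℕ} (σ C : Set (EuclideanSpace ℝ (Fin n))) : Prop :=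
  IsFaceOf σ C ∧ coneDim σ + 1 = coneDim C

/-- The polar of a cone. -/
def polarCone {n : ℕ} (C : Set (EuclideanSpace ℝ (Fin n))) :
    Set (EuclideanSpace ℝ (Fin n)) :=
  {u | ∀ x ∈ C, ⟪u, x⟫ ≤ 0}

/-- A complete polyhedral fan in `ℝ^n`. -/
def IsCompleteFan {n : ℕ} (𝓕 : Set (Set (EuclideanSpace ℝ (Fin n)))) : Prop :=
  𝓕.Finite ∧ (∀ C ∈ 𝓕, IsPolyhedralCone C) ∧
    (∀ C ∈ 𝓕, ∀ F, IsFaceOf F C → F ∈ 𝓕) ∧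
    (∀ C ∈ 𝓕, ∀ C' ∈ 𝓕, IsFaceOf (C ∩ C') C ∧ IsFaceOf (C ∩ C') C') ∧
    ⋃₀ 𝓕 = Set.univ

/-- Right-hand side of the toric differential inclusion given by `𝓕` and `δ`. -/
noncomputable def toricRHS {n : ℕ} (𝓕 : Set (Set (EuclideanSpace ℝ (Fin n))))
    (δ : ℝ) (X : EuclideanSpace ℝ (Fin n)) : Set (EuclideanSpace ℝ (Fin n)) :=
  polarCone (⋂₀ {C | C ∈ 𝓕 ∧ Metric.infDist X C ≤ δ})

/-- The quasi-toric differential inclusion given by `𝓕` and `d` is well-defined. -/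
def QTDIWellDefined {n : ℕ} (𝓕 : Set (Set (EuclideanSpace ℝ (Fin n))))
    (d : Fin n → ℝ) : Prop :=
  ∀ C ∈ 𝓕, ∀ C' ∈ 𝓕, ∀ X : EuclideanSpace ℝ (Fin n),
    ∀ (hk : coneDim C < n) (hm : coneDim C' < n),
      Metric.infDist X C ≤ d ⟨coneDim C, hk⟩ →
      Metric.infDist X C' ≤ d ⟨coneDim C', hm⟩ →
      ∃ hh : coneDim (C ∩ C') < n,
        Metric.infDist X (C ∩ C') ≤ d ⟨coneDim (C ∩ C'), hh⟩

/-- A point of `S(C)` close to the cone `C̃` is close to the proper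
face `C`, with a linear bound. -/
theorem dist_to_face_le_of_mem_span {n : ℕ}
    (Ct C : Set (EuclideanSpace ℝ (Fin n))) (hCt : IsPolyhedralCone Ct)
    (hface : IsFaceOf C Ct) (hproper : C ≠ Ct) :
    ∃ r₀ > 0, ∀ δs > 0, ∀ P : EuclideanSpace ℝ (Fin n),
      P ∈ Submodule.span ℝ C → Metric.infDist P Ct ≤ δs →
        Metric.infDist P C ≤ r₀ * δs := by
  obtain ⟨k, v, hCtv⟩ := hCt
  rcases hface with h | ⟨u, hu, hC⟩
  · exact absurd h hproper
  have hvCt : ∀ i, v i ∈ Ct := by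
    intro i
    rw [hCtv]
    refine ⟨fun j => if j = i then 1 else 0, fun j => by dsimp only; split_ifs <;> norm_num, ?_⟩
    simp [ite_smul]
  have huv : ∀ i, ⟪u, v i⟫ ≤ 0 := fun i => hu _ (hvCt i)
  have hinner : ∀ (lam : Fin k → ℝ), ⟪u, ∑ i, lam i • v i⟫ = ∑ i, lam i * ⟪u, v i⟫ := by
    intro lam
    rw [inner_sum]
    exact Finset.sum_congr rfl fun i _ => real_inner_smul_right _ _ _
  set J : Finset (Fin k) := Finset.univ.filter (fun i => ⟪u, v i⟫ < 0) with hJdef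
  by_cases hJ : J.Nonempty
  · -- main case
    set c : ℝ := J.inf' hJ (fun i => -⟪u, v i⟫) with hcdef
    have hc : 0 < c := by
      rw [hcdef, Finset.lt_inf'_iff]
      intro i hi
      have := (Finset.mem_filter.mp hi).2
      linarith
    set M : ℝ := ‖u‖ * (∑ i, ‖v i‖) / c with hMdef
    have hM : 0 ≤ M := by
      apply div_nonneg _ hc.le
      positivity
    have h1M : (0:ℝ) < 1 + M := by linarith
    refine ⟨1 + M, h1M, ?_⟩
    intro δs hδ P hP hPd
    -- P is orthogonal to u
    have hPu : ⟪u, P⟫ = 0 := by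
      have hsub : C ⊆ (LinearMap.ker (innerSL ℝ u).toLinearMap : Submodule ℝ (EuclideanSpace ℝ (Fin n))) := by
        intro x hx
        rw [hC] at hx
        simpa [LinearMap.mem_ker] using hx.2
      have := Submodule.span_le.mpr hsub hP
      simpa [LinearMap.mem_ker] using this
    -- key pointwise bound
    have key : ∀ Q ∈ Ct, Metric.infDist P C ≤ (1 + M) * dist P Q := by
      intro Q hQ
      have huQ : ⟪u, Q⟫ ≤ 0 := hu Q hQ
      rw [hCtv] at hQ
      obtain ⟨lam, hlam, hQeq⟩ := hQ
      set QI : EuclideanSpace ℝ (Fin n) :=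
        ∑ i, (if ⟪u, v i⟫ = 0 then lam i else 0) • v i with hQIdef
      have hQIC : QI ∈ C := by
        rw [hC]
        constructor
        · rw [hCtv]
          exact ⟨_, fun i => by split_ifs; exacts [hlam i, le_refl 0], rfl⟩
        · show ⟪u, QI⟫ = 0
          rw [hQIdef, hinner]
          apply Finset.sum_eq_zero
          intro i _
          split_ifs with h
          · rw [h, mul_zero]
          · rw [zero_mul]
      -- bound on -⟪u,Q⟫
      have hQu : -⟪u, Q⟫ ≤ ‖u‖ * dist P Q := by
        have h1 : ⟪u, Q - P⟫ = ⟪u, Q⟫ := by rw [inner_sub_right, hPu, sub_zero]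
        have h2 : |⟪u, Q - P⟫| ≤ ‖u‖ * ‖Q - P‖ := abs_real_inner_le_norm u (Q - P)
        rw [h1] at h2
        rw [dist_eq_norm, ← norm_sub_rev]
        calc -⟪u, Q⟫ ≤ |⟪u, Q⟫| := neg_le_abs _
          _ ≤ ‖u‖ * ‖Q - P‖ := h2
      -- coefficient bound
      have hlam_le : ∀ i, ⟪u, v i⟫ ≠ 0 → lam i ≤ -⟪u, Q⟫ / c := by
        intro i hi
        have hiJ : i ∈ J := Finset.mem_filter.mpr ⟨Finset.mem_univ i, lt_of_le_of_ne (huv i) hi⟩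
        have hci : c ≤ -⟪u, v i⟫ := Finset.inf'_le _ hiJ
        have hsum : lam i * (-⟪u, v i⟫) ≤ -⟪u, Q⟫ := by
          have : -⟪u, Q⟫ = ∑ j, lam j * (-⟪u, v j⟫) := by
            rw [hQeq, hinner, ← Finset.sum_neg_distrib]
            exact Finset.sum_congr rfl fun j _ => by ring
          rw [this]
          exact Finset.single_le_sum (f := fun j => lam j * (-⟪u, v j⟫))
            (fun j _ => mul_nonneg (hlam j) (by linarith [huv j])) (Finset.mem_univ i)
        rw [le_div_iff₀ hc]
        calc lam i * c ≤ lam i * (-⟪u, v i⟫) := by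
              apply mul_le_mul_of_nonneg_left hci (hlam i)
          _ ≤ -⟪u, Q⟫ := hsum
      -- norm bound on Q - QI
      have hQJ : ‖Q - QI‖ ≤ M * dist P Q := by
        have hsplit : Q - QI = ∑ i, (if ⟪u, v i⟫ = 0 then 0 else lam i) • v i := by
          rw [hQeq, hQIdef, ← Finset.sum_sub_distrib]
          refine Finset.sum_congr rfl fun i _ => ?_
          rw [← sub_smul]
          congr 1
          split_ifs <;> ring
        rw [hsplit]
        calc ‖∑ i, (if ⟪u, v i⟫ = 0 then 0 else lam i) • v i‖
            ≤ ∑ i, ‖(if ⟪u, v i⟫ = 0 then 0 else lam i) • v i‖ := norm_sum_le _ _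
          _ ≤ ∑ i, (-⟪u, Q⟫ / c) * ‖v i‖ := by
              apply Finset.sum_le_sum
              intro i _
              rw [norm_smul, Real.norm_eq_abs]
              apply mul_le_mul_of_nonneg_right _ (norm_nonneg _)
              split_ifs with h
              · rw [abs_zero]
                apply div_nonneg _ hc.le
                linarith
              · rw [abs_of_nonneg (hlam i)]
                exact hlam_le i h
          _ = (-⟪u, Q⟫ / c) * ∑ i, ‖v i‖ := by rw [Finset.mul_sum]
          _ ≤ (‖u‖ * dist P Q / c) * ∑ i, ‖v i‖ := by
              apply mul_le_mul_of_nonneg_right _ (by positivity)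
              gcongr
          _ = M * dist P Q := by rw [hMdef]; ring
      calc Metric.infDist P C ≤ dist P QI := Metric.infDist_le_dist_of_mem hQIC
        _ ≤ dist P Q + dist Q QI := dist_triangle _ _ _
        _ = dist P Q + ‖Q - QI‖ := by rw [dist_eq_norm Q QI]
        _ ≤ dist P Q + M * dist P Q := by linarith
        _ = (1 + M) * dist P Q := by ring
    have h0Ct : (0 : EuclideanSpace ℝ (Fin n)) ∈ Ct := by
      rw [hCtv]
      exact ⟨0, fun i => le_refl 0, by simp⟩
    have hinf : Metric.infDist P C ≤ (1 + M) * Metric.infDist P Ct := by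
      rw [← div_le_iff₀' h1M, Metric.infDist_eq_iInf (s := Ct)]
      have : Nonempty Ct := ⟨⟨0, h0Ct⟩⟩
      apply le_ciInf
      intro q
      rw [div_le_iff₀' h1M]
      exact key q q.2
    calc Metric.infDist P C ≤ (1 + M) * Metric.infDist P Ct := hinf
      _ ≤ (1 + M) * δs := by
          apply mul_le_mul_of_nonneg_left hPd h1M.le
  · -- J empty: C = Ct, contradiction
    exfalso
    apply hproper
    rw [hC, Set.inter_eq_left]
    intro x hx
    rw [hCtv] at hx
    obtain ⟨lam, hlam, rfl⟩ := hx
    have : ∀ i, ⟪u, v i⟫ = 0 := by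
      intro i
      by_contra h
      exact hJ ⟨i, Finset.mem_filter.mpr ⟨Finset.mem_univ i, lt_of_le_of_ne (huv i) h⟩⟩
    simp only [Set.mem_setOf_eq, hinner, this, mul_zero, Finset.sum_const_zero]
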